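/- For any w ∈ ℝ^L and ε > 0, argmax^ε(w) = {j ∈ [L] : w_j > t_ε(w)}; that is, the inflated argmax of w is exactly the set of coordinates exceeding the threshold t_ε(w). -/

import Mathlib

noncomputable section

/-- The set `R_j^ε = {w ∈ ℝ^L : w_j ≥ max_{ℓ≠j} w_ℓ + ε/√2}`. -/
def Rset (L : ℕ) (ε : ℝ) (j : Fin L) : Set (EuclideanSpace ℝ (Fin L)) :=
  {w | ∀ ℓ : Fin L, ℓ ≠ j → w ℓ + ε / Real.sqrt 2 ≤ w j}

/-- The inflated argmax: `argmax^ε(w) = {j ∈ [L] : dist(w, R_j^ε) < ε}`. -/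
def inflatedArgmax (L : ℕ) (ε : ℝ) (w : EuclideanSpace ℝ (Fin L)) : Set (Fin L) :=
  {j | Metric.infDist w (Rset L ε j) < ε}

lemma max_mul_self_eq_sq (x : ℝ) : max x 0 * x = (max x 0)^2 := by
  rcases le_total x 0 with h | h
  · rw [max_eq_right h]; ring
  · rw [max_eq_left h]; ring

set_option maxHeartbeats 1000000 in
/-- `argmax^ε(w) = {j : w_j > t_ε(w)}`, where `c = c_ε(w)` is the unique solution of
`(Σ_j (w_j − c)_+)² + Σ_j (w_j − c)_+² = ε²` and
`t_ε(w) = c + ε/√2 − Σ_j (w_j − c)_+`. -/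
theorem inflatedArgmax_eq_threshold (L : ℕ) (hL : 2 ≤ L) (ε : ℝ) (hε : 0 < ε)
    (w : EuclideanSpace ℝ (Fin L)) (c : ℝ)
    (hc : (∑ j : Fin L, max (w j - c) 0)^2 + ∑ j : Fin L, (max (w j - c) 0)^2 = ε^2) :
    inflatedArgmax L ε w
      = {j : Fin L | w j > c + ε / Real.sqrt 2 - ∑ k : Fin L, max (w k - c) 0} := by
  have h2 : (0:ℝ) < Real.sqrt 2 := Real.sqrt_pos.2 (by norm_num)
  set δ := ε / Real.sqrt 2 with hδdef
  have hδpos : 0 < δ := div_pos hε h2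
  set lam : Fin L → ℝ := fun i => max (w i - c) 0 with hlam
  set S := ∑ k : Fin L, lam k with hSdef
  have hlam0 : ∀ i, 0 ≤ lam i := fun i => le_max_right _ _
  have hS0 : 0 ≤ S := Finset.sum_nonneg fun k _ => hlam0 k
  have hsum_sq_le : ∑ k : Fin L, (lam k)^2 ≤ S^2 := by
    calc ∑ k : Fin L, (lam k)^2 ≤ ∑ k : Fin L, lam k * S := by
          apply Finset.sum_le_sum
          intro k _
          have h1 : lam k ≤ S :=
            Finset.single_le_sum (fun k _ => hlam0 k) (Finset.mem_univ k)
          nlinarith [hlam0 k]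
      _ = S^2 := by rw [← Finset.sum_mul]; ring
  have hε2 : ε^2 ≤ 2 * S^2 := by nlinarith
  have hδ2 : δ^2 = ε^2 / 2 := by
    rw [hδdef, div_pow, Real.sq_sqrt (by norm_num : (0:ℝ) ≤ 2)]
  have hδS : δ ≤ S := by
    have h := Real.sqrt_le_sqrt (show δ^2 ≤ S^2 by nlinarith)
    rwa [Real.sqrt_sq hδpos.le, Real.sqrt_sq hS0] at h
  have hSpos : 0 < S := lt_of_lt_of_le hδpos hδS
  ext j
  simp only [inflatedArgmax, Set.mem_setOf_eq]
  constructor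
  · -- dist < ε → w j > t ; contrapositive
    intro hlt
    by_contra hj
    push_neg at hj
    -- hj : w j ≤ c + δ - S
    have hwjc : w j ≤ c := by linarith
    have hlamj : lam j = 0 := max_eq_right (by simp only [hlam]; linarith)
    have key : ∀ v, v ∈ Rset L ε j → ε ≤ dist w v := by
      intro v hv
      rw [EuclideanSpace.dist_eq]
      rw [Real.le_sqrt hε.le (Finset.sum_nonneg fun i _ => sq_nonneg _)]
      set u : Fin L → ℝ := fun i => if i = j then -S else lam i with hu
      have hterm : ∀ i, dist (w i) (v i)^2 = (w i - v i)^2 := fun i => by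
        rw [Real.dist_eq, sq_abs]
      have hstep1 : ∑ i : Fin L, (2*(w i - v i)*u i - (u i)^2)
          ≤ ∑ i : Fin L, (w i - v i)^2 := by
        have h0 : 0 ≤ ∑ i : Fin L, ((w i - v i)^2 - (2*(w i - v i)*u i - (u i)^2)) := by
          apply Finset.sum_nonneg
          intro i _
          have hsq := sq_nonneg (w i - v i - u i)
          nlinarith
        rw [Finset.sum_sub_distrib] at h0
        linarith
      have hsum_erase : ∑ i ∈ Finset.univ.erase j, lam i = S := by
        have h := Finset.add_sum_erase Finset.univ lam (Finset.mem_univ j)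
        rw [hlamj] at h
        rw [← hSdef] at h
        linarith
      have hsq_erase : ∑ i ∈ Finset.univ.erase j, (lam i)^2 = ∑ i : Fin L, (lam i)^2 := by
        have h := Finset.add_sum_erase Finset.univ (fun i => (lam i)^2) (Finset.mem_univ j)
        simp only [hlamj] at h
        simpa using h
      have hsplit : ∑ i : Fin L, (2*(w i - v i)*u i - (u i)^2)
          = (2*(w j - v j)*(-S) - S^2)
            + ∑ i ∈ Finset.univ.erase j, (2*(w i - v i)*(lam i) - (lam i)^2) := by
        rw [← Finset.add_sum_erase Finset.univ _ (Finset.mem_univ j)]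
        congr 1
        · simp only [hu, if_pos rfl]; ring
        · apply Finset.sum_congr rfl
          intro i hi
          have hij : i ≠ j := Finset.ne_of_mem_erase hi
          simp only [hu, if_neg hij]
      have hlower : ∀ i ∈ Finset.univ.erase j,
          (lam i)^2 + 2*S*lam i + 2*(w j - v j)*lam i
            ≤ 2*(w i - v i)*(lam i) - (lam i)^2 := by
        intro i hi
        have hij : i ≠ j := Finset.ne_of_mem_erase hi
        have hvi : v i + δ ≤ v j := hv i hij
        have hmul : lam i * (w i - c) = (lam i)^2 := max_mul_self_eq_sq (w i - c)
        have h1 : 0 ≤ lam i * (v j - v i - δ) := mul_nonneg (hlam0 i) (by linarith)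
        have h2 : 0 ≤ lam i * (c + δ - w j - S) := mul_nonneg (hlam0 i) (by linarith)
        nlinarith
      have hsum_lower : ∑ i ∈ Finset.univ.erase j,
          ((lam i)^2 + 2*S*lam i + 2*(w j - v j)*lam i)
          ≤ ∑ i ∈ Finset.univ.erase j, (2*(w i - v i)*(lam i) - (lam i)^2) :=
        Finset.sum_le_sum hlower
      have hsum_eval : ∑ i ∈ Finset.univ.erase j,
          ((lam i)^2 + 2*S*lam i + 2*(w j - v j)*lam i)
          = (∑ i : Fin L, (lam i)^2) + 2*S*S + 2*(w j - v j)*S := by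
        rw [Finset.sum_add_distrib, Finset.sum_add_distrib, ← Finset.mul_sum,
          ← Finset.mul_sum, hsum_erase, hsq_erase]
      calc ε^2 = S^2 + ∑ i : Fin L, (lam i)^2 := by rw [← hc]
        _ ≤ (2*(w j - v j)*(-S) - S^2)
            + ∑ i ∈ Finset.univ.erase j, (2*(w i - v i)*(lam i) - (lam i)^2) := by
            nlinarith [hsum_lower, hsum_eval]
        _ = ∑ i : Fin L, (2*(w i - v i)*u i - (u i)^2) := hsplit.symm
        _ ≤ ∑ i : Fin L, (w i - v i)^2 := hstep1
        _ = ∑ i : Fin L, dist (w i) (v i)^2 := by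
            apply Finset.sum_congr rfl; intro i _; rw [hterm]
    have hne : (Rset L ε j).Nonempty := by
      refine ⟨(WithLp.equiv 2 _).symm (fun i => if i = j then δ else 0), ?_⟩
      intro ℓ hℓ
      simp only [Rset, Set.mem_setOf_eq, WithLp.equiv_symm_apply, PiLp.toLp_apply, if_neg hℓ,
        eq_self_iff_true, if_true]
      linarith
    obtain ⟨y, hy, hylt⟩ := (Metric.infDist_lt_iff hne).1 hlt
    exact absurd hylt (not_lt.2 (key y hy))
  · -- w j > t → dist < ε
    intro hj
    set v : EuclideanSpace ℝ (Fin L) :=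
      (WithLp.equiv 2 _).symm (fun i => if i = j then max (w j) (c + δ) else min (w i) c)
      with hvdef
    have hvapp : ∀ i, v i = if i = j then max (w j) (c + δ) else min (w i) c :=
      fun i => by simp only [hvdef, WithLp.equiv_symm_apply, PiLp.toLp_apply]
    have hvmem : v ∈ Rset L ε j := by
      intro ℓ hℓ
      rw [hvapp ℓ, if_neg hℓ, hvapp j, if_pos rfl]
      have h1 : min (w ℓ) c ≤ c := min_le_right _ _
      have h2 : c + δ ≤ max (w j) (c+δ) := le_max_right _ _
      have h3 : (w ℓ : ℝ) + ε / Real.sqrt 2 = w ℓ + δ := rfl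
      linarith
    have hdist : dist w v < ε := by
      rw [EuclideanSpace.dist_eq, Real.sqrt_lt' hε]
      have hterm : ∀ i, dist (w i) (v i)^2 = (w i - v i)^2 := fun i => by
        rw [Real.dist_eq, sq_abs]
      have hvj : (w j - v j)^2 = (max (c + δ - w j) 0)^2 := by
        rw [hvapp j, if_pos rfl]
        rcases le_total (w j) (c + δ) with h | h
        · rw [max_eq_right h, max_eq_left (by linarith)]; ring
        · rw [max_eq_left h, max_eq_right (by linarith)]; ring
      have hvi : ∀ i ∈ Finset.univ.erase j, (w i - v i)^2 = (lam i)^2 := by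
        intro i hi
        have hij : i ≠ j := Finset.ne_of_mem_erase hi
        rw [hvapp i, if_neg hij]
        simp only [hlam]
        rcases le_total (w i) c with h | h
        · rw [min_eq_left h, max_eq_right (by linarith)]; ring
        · rw [min_eq_right h, max_eq_left (by linarith)]
      have hmax_lt : max (c + δ - w j) 0 < S := by
        rcases le_total (c + δ - w j) 0 with h | h
        · rw [max_eq_right h]; exact hSpos
        · rw [max_eq_left h]; linarith
      have hmax_sq : (max (c + δ - w j) 0)^2 < S^2 := by
        have h0 : 0 ≤ max (c + δ - w j) 0 := le_max_right _ _
        nlinarith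
      have hsq_erase_le : ∑ i ∈ Finset.univ.erase j, (lam i)^2
          ≤ ∑ i : Fin L, (lam i)^2 := by
        apply Finset.sum_le_sum_of_subset_of_nonneg (Finset.erase_subset _ _)
        intro i _ _; exact sq_nonneg _
      calc ∑ i : Fin L, dist (w i) (v i)^2
          = ∑ i : Fin L, (w i - v i)^2 := by
            apply Finset.sum_congr rfl; intro i _; rw [hterm]
        _ = (w j - v j)^2 + ∑ i ∈ Finset.univ.erase j, (w i - v i)^2 :=
            (Finset.add_sum_erase Finset.univ _ (Finset.mem_univ j)).symm
        _ = (max (c + δ - w j) 0)^2 + ∑ i ∈ Finset.univ.erase j, (lam i)^2 := by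
            rw [hvj]; congr 1; exact Finset.sum_congr rfl hvi
        _ < S^2 + ∑ i : Fin L, (lam i)^2 := by
            have := hsq_erase_le; linarith
        _ = ε^2 := hc
    exact lt_of_le_of_lt (Metric.infDist_le_dist_of_mem hvmem) hdist
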